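/- Let G be a group, χ : G → (ℝ, +) a nonzero homomorphism, and M = G_χ. Then M has finitely many conjugacy classes of finite subgroups (i.e., there exist finitely many finite subgroups K₁, …, K_s of G such that every finite subgroup L of G equals t⁻¹K_i t for some index i and some t ∈ ker χ) if and only if both of the following hold: (i) N_G(K)·ker χ has finite index in G for every finite subgroup K of G; (ii) G has finitely many conjugacy classes of finite subgroups. -/

import Mathlib

section Aux

variable {G : Type*} [Group G]

/-- Conjugation image of a set: `t⁻¹ S t`. -/
def sconj (t : G) (S : Set G) : Set G := (fun a => t⁻¹ * a * t) '' S

lemma mem_sconj {t x : G} {S : Set G} : x ∈ sconj t S ↔ t * x * t⁻¹ ∈ S := by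
  constructor
  · rintro ⟨a, ha, rfl⟩
    have h : t * (t⁻¹ * a * t) * t⁻¹ = a := by group
    rw [h]; exact ha
  · intro h
    exact ⟨t * x * t⁻¹, h, by group⟩

lemma sconj_sconj (u v : G) (S : Set G) : sconj u (sconj v S) = sconj (v * u) S := by
  ext x
  rw [mem_sconj, mem_sconj, mem_sconj,
    show v * (u * x * u⁻¹) * v⁻¹ = (v * u) * x * (v * u)⁻¹ by group]

lemma sconj_one (S : Set G) : sconj 1 S = S := by
  ext x; rw [mem_sconj]; simp

/-- Conjugate subgroup `t⁻¹ K t`. -/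
def csub (t : G) (K : Subgroup G) : Subgroup G :=
  K.map ((MulAut.conj t⁻¹).toMonoidHom)

lemma coe_csub (t : G) (K : Subgroup G) : (csub t K : Set G) = sconj t (K : Set G) := by
  ext x
  simp only [csub, Subgroup.coe_map, Set.mem_image, SetLike.mem_coe, sconj,
    MulEquiv.coe_toMonoidHom, MulAut.conj_apply, inv_inv]

lemma sconj_eq_aux {u v : G} {K : Subgroup G}
    (h : sconj u (K : Set G) = sconj v (K : Set G)) {x : G} (hx : x ∈ K) :
    (v * u⁻¹) * x * (v * u⁻¹)⁻¹ ∈ K := by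
  have h1 : u⁻¹ * x * u ∈ sconj v (K : Set G) := h ▸ ⟨x, hx, rfl⟩
  have h2 : v * (u⁻¹ * x * u) * v⁻¹ ∈ (K : Set G) := mem_sconj.mp h1
  have e : (v * u⁻¹) * x * (v * u⁻¹)⁻¹ = v * (u⁻¹ * x * u) * v⁻¹ := by group
  rw [e]; exact h2

lemma mem_normalizer_of_sconj_eq {u v : G} {K : Subgroup G}
    (h : sconj u (K : Set G) = sconj v (K : Set G)) : v * u⁻¹ ∈ Subgroup.normalizer (K : Set G) := by
  rw [Subgroup.mem_normalizer_iff]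
  intro x
  constructor
  · exact fun hx => sconj_eq_aux h hx
  · intro hx
    have h2 := sconj_eq_aux h.symm hx
    have e : (u * v⁻¹) * ((v * u⁻¹) * x * (v * u⁻¹)⁻¹) * (u * v⁻¹)⁻¹ = x := by group
    rwa [e] at h2

lemma sconj_of_mem_normalizer {a : G} {K : Subgroup G} (ha : a ∈ Subgroup.normalizer (K : Set G)) :
    sconj a (K : Set G) = (K : Set G) := by
  ext x
  rw [mem_sconj, SetLike.mem_coe, SetLike.mem_coe]
  exact (Subgroup.mem_normalizer_iff.mp ha x).symm

end Aux

/-- for a group `G` and a nonzero homomorphism `χ : G → (ℝ, +)`, the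
monoid `M = G_χ` has finitely many conjugacy classes of finite subgroups (conjugating
by its invertible elements, i.e. by elements of `ker χ`) iff
(i) `N_G(K)·ker χ` has finite index in `G` for every finite subgroup `K`, and
(ii) `G` has finitely many conjugacy classes of finite subgroups. -/
theorem stmt10 {G : Type*} [Group G] (χ : G → ℝ)
    (hhom : ∀ a b : G, χ (a * b) = χ a + χ b) (hne : ∃ g : G, χ g ≠ 0) :
    (∃ (s : ℕ) (Ks : Fin s → Subgroup G), (∀ i, ((Ks i : Set G)).Finite) ∧
        ∀ L : Subgroup G, (L : Set G).Finite →
          ∃ (i : Fin s) (t : G), χ t = 0 ∧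
            (fun a => t⁻¹ * a * t) '' (Ks i : Set G) = (L : Set G)) ↔
    ((∀ K : Subgroup G, (K : Set G).Finite →
        ∃ T : Finset G, ∀ g : G, ∃ t ∈ T, ∃ a ∈ Subgroup.normalizer (K : Set G), ∃ b : G,
          χ b = 0 ∧ g = a * b * t) ∧
      (∃ (s : ℕ) (Ks : Fin s → Subgroup G), (∀ i, ((Ks i : Set G)).Finite) ∧
        ∀ L : Subgroup G, (L : Set G).Finite →
          ∃ (i : Fin s) (t : G),
            (fun a => t⁻¹ * a * t) '' (Ks i : Set G) = (L : Set G))) := by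
  classical
  have chi_one : χ 1 = 0 := by
    have := hhom 1 1; simp at this; linarith
  have chi_inv : ∀ g : G, χ g⁻¹ = -χ g := by
    intro g
    have := hhom g g⁻¹
    rw [mul_inv_cancel, chi_one] at this
    linarith
  constructor
  · rintro ⟨s, Ks, hfin, hcl⟩
    constructor
    · -- (i) finite index of N_G(K)·ker χ
      intro K hK
      -- representatives for each class index
      have repP : Fin s → Prop := fun i =>
        ∃ p : G × G, χ p.2 = 0 ∧ sconj p.2 ((Ks i : Set G)) = sconj p.1 (K : Set G)
      let reps : Fin s → G × G := fun i =>
        if h : ∃ p : G × G, χ p.2 = 0 ∧ sconj p.2 ((Ks i : Set G)) = sconj p.1 (K : Set G)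
        then h.choose else (1, 1)
      refine ⟨Finset.image (fun i => (reps i).1) Finset.univ, ?_⟩
      intro h
      obtain ⟨i, th, hth, himg⟩ := hcl (csub h K) (by rw [coe_csub]; exact hK.image _)
      have himg' : sconj th ((Ks i : Set G)) = sconj h (K : Set G) := by
        rw [← coe_csub h K]; exact himg
      have hPi : ∃ p : G × G, χ p.2 = 0 ∧ sconj p.2 ((Ks i : Set G)) = sconj p.1 (K : Set G) :=
        ⟨(h, th), hth, himg'⟩
      have hspec : χ (reps i).2 = 0 ∧
          sconj (reps i).2 ((Ks i : Set G)) = sconj (reps i).1 (K : Set G) := by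
        simpa only [reps, dif_pos hPi] using hPi.choose_spec
      set g := (reps i).1 with hg
      set tg := (reps i).2 with htg
      obtain ⟨htg0, hgspec⟩ := hspec
      -- Ks i = sconj (g * tg⁻¹) K and Ks i = sconj (h * th⁻¹) K
      have e1 : (Ks i : Set G) = sconj (g * tg⁻¹) (K : Set G) := by
        have := congrArg (sconj tg⁻¹) hgspec
        rw [sconj_sconj, sconj_sconj, mul_inv_cancel, sconj_one] at this
        exact this
      have e2 : (Ks i : Set G) = sconj (h * th⁻¹) (K : Set G) := by
        have := congrArg (sconj th⁻¹) himg'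
        rw [sconj_sconj, sconj_sconj, mul_inv_cancel, sconj_one] at this
        exact this
      have heq : sconj (g * tg⁻¹) (K : Set G) = sconj (h * th⁻¹) (K : Set G) :=
        e1.symm.trans e2
      have haN : (h * th⁻¹) * (g * tg⁻¹)⁻¹ ∈ Subgroup.normalizer (K : Set G) :=
        mem_normalizer_of_sconj_eq heq
      refine ⟨g, Finset.mem_image.mpr ⟨i, Finset.mem_univ _, rfl⟩,
        (h * th⁻¹) * (g * tg⁻¹)⁻¹, haN, g * tg⁻¹ * th * g⁻¹, ?_, ?_⟩
      · rw [hhom, hhom, hhom, chi_inv, chi_inv, htg0, hth]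
        ring
      · group
    · -- (ii)
      refine ⟨s, Ks, hfin, fun L hL => ?_⟩
      obtain ⟨i, t, _, himg⟩ := hcl L hL
      exact ⟨i, t, himg⟩
  · rintro ⟨hidx, s, Ks, hfin, hcl⟩
    let T : Fin s → Finset G := fun i => (hidx (Ks i) (hfin i)).choose
    have hT : ∀ i, ∀ g : G, ∃ t ∈ T i, ∃ a ∈ Subgroup.normalizer (Ks i : Set G), ∃ b : G,
        χ b = 0 ∧ g = a * b * t := fun i => (hidx (Ks i) (hfin i)).choose_spec
    let I := Σ i : Fin s, {x // x ∈ T i}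
    let e : I ≃ Fin (Fintype.card I) := Fintype.equivFin I
    refine ⟨Fintype.card I, fun j => csub ((e.symm j).2 : G) (Ks (e.symm j).1), ?_, ?_⟩
    · intro j
      rw [coe_csub]
      exact (hfin _).image _
    · intro L hL
      obtain ⟨i, g, himg⟩ := hcl L hL
      have himg' : sconj g ((Ks i : Set G)) = (L : Set G) := himg
      obtain ⟨t, htT, a, haN, b, hb, hg⟩ := hT i g
      refine ⟨e ⟨i, ⟨t, htT⟩⟩, t⁻¹ * b * t, ?_, ?_⟩
      · rw [hhom, hhom, chi_inv, hb]; ring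
      · show sconj (t⁻¹ * b * t)
          ((csub ((e.symm (e ⟨i, ⟨t, htT⟩⟩)).2 : G) (Ks (e.symm (e ⟨i, ⟨t, htT⟩⟩)).1) : Set G))
          = (L : Set G)
        rw [Equiv.symm_apply_apply, coe_csub, sconj_sconj,
          show t * (t⁻¹ * b * t) = b * t by group]
        have key := sconj_sconj (b * t) a ((Ks i : Set G))
        rw [sconj_of_mem_normalizer haN] at key
        rw [key, ← mul_assoc, ← hg]
        exact himg'
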